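/- For every integer N ≥ 1, the sum of squared weights satisfies ∑_{i=1}^{N} (η_N^i)^2 ≤ 2H/N. -/

import Mathlib

/-- Learning rate `η_j = (H+1)/(H+j)` and weights
`η_N^0 = ∏_{j=1}^N (1-η_j)`, `η_N^i = η_i · ∏_{j=i+1}^N (1-η_j)` (1 ≤ i ≤ N)
of the UCB-H/OPIQ Q-learning update. -/
noncomputable def etaWeight (H N i : ℕ) : ℝ :=
  (if i = 0 then 1 else ((H : ℝ) + 1) / ((H : ℝ) + i)) *
    ∏ j ∈ Finset.Icc (i + 1) N, (1 - ((H : ℝ) + 1) / ((H : ℝ) + j))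

lemma eta_factor_nonneg (H j : ℕ) (hj : 1 ≤ j) :
    0 ≤ 1 - ((H : ℝ) + 1) / ((H : ℝ) + j) := by
  have hj' : (1 : ℝ) ≤ (j : ℝ) := by exact_mod_cast hj
  have hpos : (0 : ℝ) < (H : ℝ) + j := by positivity
  rw [sub_nonneg, div_le_one hpos]
  linarith

lemma etaWeight_nonneg (H N i : ℕ) (hi : 1 ≤ i) : 0 ≤ etaWeight H N i := by
  unfold etaWeight
  rw [if_neg (by omega)]
  apply mul_nonneg (by positivity)
  apply Finset.prod_nonneg
  intro j hj
  rw [Finset.mem_Icc] at hj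
  exact eta_factor_nonneg H j (by omega)

lemma etaWeight_succ (H N i : ℕ) (hi : i ≤ N) :
    etaWeight H (N + 1) i
      = etaWeight H N i * (1 - ((H : ℝ) + 1) / ((H : ℝ) + N + 1)) := by
  unfold etaWeight
  rw [Finset.prod_Icc_succ_top (by omega : i + 1 ≤ N + 1), ← mul_assoc, mul_assoc]
  push_cast
  ring

lemma etaWeight_self (H N : ℕ) (hN : 1 ≤ N) :
    etaWeight H N N = ((H : ℝ) + 1) / ((H : ℝ) + N) := by
  unfold etaWeight
  rw [if_neg (by omega), Finset.Icc_eq_empty (by omega), Finset.prod_empty, mul_one]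

lemma etaWeight_sum (H N : ℕ) (hN : 1 ≤ N) :
    ∑ i ∈ Finset.Icc 1 N, etaWeight H N i = 1 := by
  induction N, hN using Nat.le_induction with
  | base =>
    simp only [Finset.Icc_self, Finset.sum_singleton]
    rw [etaWeight_self H 1 le_rfl]
    have : (H : ℝ) + 1 ≠ 0 := by positivity
    field_simp
    push_cast
    ring
  | succ N hN ih =>
    rw [Finset.sum_Icc_succ_top (by omega : 1 ≤ N + 1)]
    have : ∑ i ∈ Finset.Icc 1 N, etaWeight H (N + 1) i
        = ∑ i ∈ Finset.Icc 1 N, etaWeight H N i * (1 - ((H : ℝ) + 1) / ((H : ℝ) + N + 1)) := by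
      apply Finset.sum_congr rfl
      intro i hi
      rw [Finset.mem_Icc] at hi
      exact etaWeight_succ H N i hi.2
    rw [this, ← Finset.sum_mul, ih, one_mul, etaWeight_self H (N + 1) (by omega)]
    push_cast
    have hpos : (0 : ℝ) < (H : ℝ) + N + 1 := by positivity
    field_simp
    ring

lemma etaWeight_le (H N : ℕ) (hN : 1 ≤ N) (i : ℕ) (hi1 : 1 ≤ i) (hiN : i ≤ N) :
    etaWeight H N i ≤ ((H : ℝ) + 1) / ((H : ℝ) + N) := by
  induction N, hN using Nat.le_induction with
  | base =>
    have : i = 1 := by omega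
    subst this
    rw [etaWeight_self H 1 le_rfl]
  | succ N hN ih =>
    rcases eq_or_lt_of_le hiN with h | h
    · rw [h, etaWeight_self H (N + 1) (by omega)]
    · have hiN' : i ≤ N := by omega
      rw [etaWeight_succ H N i hiN']
      have hN' : (1 : ℝ) ≤ (N : ℝ) := by exact_mod_cast hN
      have hp1 : (0 : ℝ) < (H : ℝ) + N := by positivity
      have hp2 : (0 : ℝ) < (H : ℝ) + N + 1 := by positivity
      have hfac : 0 ≤ 1 - ((H : ℝ) + 1) / ((H : ℝ) + N + 1) := by
        rw [sub_nonneg, div_le_one hp2]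
        linarith
      have h1 : etaWeight H N i * (1 - ((H : ℝ) + 1) / ((H : ℝ) + N + 1))
          ≤ ((H : ℝ) + 1) / ((H : ℝ) + N) * (1 - ((H : ℝ) + 1) / ((H : ℝ) + N + 1)) :=
        mul_le_mul_of_nonneg_right (ih hiN') hfac
      refine h1.trans ?_
      have hcast : ((H : ℝ) + ((N + 1 : ℕ) : ℝ)) = (H : ℝ) + N + 1 := by push_cast; ring
      rw [hcast]
      have heq : 1 - ((H : ℝ) + 1) / ((H : ℝ) + N + 1) = (N : ℝ) / ((H : ℝ) + N + 1) := by
        field_simp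
        ring
      rw [heq, div_mul_div_comm, div_le_div_iff₀ (mul_pos hp1 hp2) hp2]
      nlinarith [mul_nonneg (mul_nonneg (show (0:ℝ) ≤ (H:ℝ) + 1 by positivity)
        (Nat.cast_nonneg (α := ℝ) H)) hp2.le]

/-- Lemma 1(b), second part: `∑_{i=1}^N (η_N^i)^2 ≤ 2H/N`. -/
theorem etaWeight_sum_sq_le (H : ℕ) (hH : 1 ≤ H) (N : ℕ) (hN : 1 ≤ N) :
    ∑ i ∈ Finset.Icc 1 N, (etaWeight H N i) ^ 2 ≤ 2 * (H : ℝ) / N := by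
  have hstep : ∑ i ∈ Finset.Icc 1 N, (etaWeight H N i) ^ 2
      ≤ ∑ i ∈ Finset.Icc 1 N, ((H : ℝ) + 1) / ((H : ℝ) + N) * etaWeight H N i := by
    apply Finset.sum_le_sum
    intro i hi
    rw [Finset.mem_Icc] at hi
    rw [sq]
    exact mul_le_mul_of_nonneg_right (etaWeight_le H N hN i hi.1 hi.2)
      (etaWeight_nonneg H N i hi.1)
  rw [← Finset.mul_sum, etaWeight_sum H N hN, mul_one] at hstep
  refine hstep.trans ?_
  have hH' : (1 : ℝ) ≤ (H : ℝ) := by exact_mod_cast hH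
  have hN' : (1 : ℝ) ≤ (N : ℝ) := by exact_mod_cast hN
  rw [div_le_div_iff₀ (by positivity) (by positivity)]
  nlinarith
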